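/- Let (I_n)_{n∈ℤ} be a stochastic process with I_0=0 satisfying: for every k ∈ ℤ there exists a random variable T_k such that (I_{k+n} − I_k − n T_k)_{n∈ℤ} has the same law as (I_n)_{n∈ℤ}. For k, m ≥ 1 set γ_{k,m}^− = min_{1≤n≤m} (I_k − I_{k−n})/n and γ_{k,m}^+ = max_{1≤n≤m} (I_{k+n} − I_k)/n, and ϑ_m = max(γ_{0,m}^− − γ_{0,m}^+, 0). Then for 1 ≤ k ≤ N−1, E[max(γ_{k,k}^− − γ_{k,N−k}^+, 0)] ≥ E[ϑ_N]. -/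

import Mathlib

open MeasureTheory

private lemma meas_inf' {Ω : Type*} [MeasurableSpace Ω] {ι : Type*} (s : Finset ι)
    (hs : s.Nonempty) (g : ι → Ω → ℝ) (hg : ∀ i, Measurable (g i)) :
    Measurable fun ω => s.inf' hs fun i => g i ω := by
  induction hs using Finset.Nonempty.cons_induction with
  | singleton a => simpa using hg a
  | cons a s ha hs' ih =>
      simp_rw [Finset.inf'_cons hs']
      exact (hg a).inf ih

private lemma meas_sup' {Ω : Type*} [MeasurableSpace Ω] {ι : Type*} (s : Finset ι)
    (hs : s.Nonempty) (g : ι → Ω → ℝ) (hg : ∀ i, Measurable (g i)) :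
    Measurable fun ω => s.sup' hs fun i => g i ω := by
  induction hs using Finset.Nonempty.cons_induction with
  | singleton a => simpa using hg a
  | cons a s ha hs' ih =>
      simp_rw [Finset.sup'_cons hs']
      exact (hg a).sup ih

private lemma inf'_sub_const {ι : Type*} (s : Finset ι) (hs : s.Nonempty) (f : ι → ℝ) (c : ℝ) :
    (s.inf' hs fun i => f i - c) = s.inf' hs f - c := by
  induction hs using Finset.Nonempty.cons_induction with
  | singleton a => simp
  | cons a s ha hs' ih =>
      rw [Finset.inf'_cons hs', Finset.inf'_cons hs', ih,
        min_sub_sub_right]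

private lemma sup'_sub_const {ι : Type*} (s : Finset ι) (hs : s.Nonempty) (f : ι → ℝ) (c : ℝ) :
    (s.sup' hs fun i => f i - c) = s.sup' hs f - c := by
  induction hs using Finset.Nonempty.cons_induction with
  | singleton a => simp
  | cons a s ha hs' ih =>
      rw [Finset.sup'_cons hs', Finset.sup'_cons hs', ih,
        max_sub_sub_right]

/-- for a process with the shift property, for `1 ≤ k ≤ N-1`,
`E[(γ_{k,k}^- - γ_{k,N-k}^+)₊] ≥ E[ϑ_N]` where
`ϑ_N = (γ_{0,N}^- - γ_{0,N}^+)₊`. -/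
theorem stmt_10 {Ω : Type*} [MeasurableSpace Ω] (P : Measure Ω) [IsProbabilityMeasure P]
    (I : ℤ → Ω → ℝ) (hMeas : ∀ n, Measurable (I n))
    (hI0 : ∀ ω, I 0 ω = 0)
    (T : ℤ → Ω → ℝ)
    (hshift : ∀ k : ℤ,
      Measure.map (fun ω => fun n : ℤ => I (k + n) ω - I k ω - (n : ℝ) * T k ω) P
        = Measure.map (fun ω => fun n : ℤ => I n ω) P)
    (N k : ℕ) (hk : 1 ≤ k) (hkN : k ≤ N - 1) (hN : 2 ≤ N) :
    ∫⁻ ω, ENNReal.ofReal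
        (max ((sInf ((fun n : ℤ => (I k ω - I ((k : ℤ) - n) ω) / (n : ℝ)) '' Set.Icc 1 (k : ℤ)))
              - (sSup ((fun n : ℤ => (I ((k : ℤ) + n) ω - I k ω) / (n : ℝ))
                  '' Set.Icc 1 ((N : ℤ) - k)))) 0) ∂P
      ≥ ∫⁻ ω, ENNReal.ofReal
        (max ((sInf ((fun n : ℤ => (I 0 ω - I (-n) ω) / (n : ℝ)) '' Set.Icc 1 (N : ℤ)))
              - (sSup ((fun n : ℤ => (I n ω - I 0 ω) / (n : ℝ)) '' Set.Icc 1 (N : ℤ)))) 0) ∂P := by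
  have hkN' : (k : ℤ) + 1 ≤ (N : ℤ) := by
    have : k + 1 ≤ N := by omega
    exact_mod_cast this
  have hk1 : (1 : ℤ) ≤ (k : ℤ) := by exact_mod_cast hk
  have hN1 : (1 : ℤ) ≤ (N : ℤ) := by omega
  have hNk1 : (1 : ℤ) ≤ (N : ℤ) - k := by omega
  have hsN : (Finset.Icc (1 : ℤ) (N : ℤ)).Nonempty := Finset.nonempty_Icc.2 hN1
  set γm : Ω → ℝ := fun ω =>
    sInf ((fun n : ℤ => (I k ω - I ((k : ℤ) - n) ω) / (n : ℝ)) '' Set.Icc 1 (N : ℤ)) with hγm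
  set γp : Ω → ℝ := fun ω =>
    sSup ((fun n : ℤ => (I ((k : ℤ) + n) ω - I k ω) / (n : ℝ)) '' Set.Icc 1 (N : ℤ)) with hγp
  -- Step A: pointwise comparison
  have stepA : ∫⁻ ω, ENNReal.ofReal (max (γm ω - γp ω) 0) ∂P ≤
      ∫⁻ ω, ENNReal.ofReal
        (max ((sInf ((fun n : ℤ => (I k ω - I ((k : ℤ) - n) ω) / (n : ℝ)) '' Set.Icc 1 (k : ℤ)))
              - (sSup ((fun n : ℤ => (I ((k : ℤ) + n) ω - I k ω) / (n : ℝ))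
                  '' Set.Icc 1 ((N : ℤ) - k)))) 0) ∂P := by
    refine lintegral_mono fun ω => ?_
    refine ENNReal.ofReal_le_ofReal (max_le_max (sub_le_sub ?_ ?_) le_rfl)
    · refine csInf_le_csInf ?_ ?_ (Set.image_mono (Set.Icc_subset_Icc_right (by omega)))
      · exact (((Set.finite_Icc _ _).image _)).bddBelow
      · exact (Set.nonempty_Icc.2 hk1).image _
    · refine csSup_le_csSup ?_ ?_ (Set.image_mono (Set.Icc_subset_Icc_right (by omega)))
      · exact (((Set.finite_Icc _ _).image _)).bddAbove
      · exact (Set.nonempty_Icc.2 hNk1).image _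
  refine le_trans ?_ stepA
  -- the functional F on path space
  set F : (ℤ → ℝ) → ENNReal := fun f => ENNReal.ofReal
      (max ((sInf ((fun n : ℤ => (f 0 - f (-n)) / (n : ℝ)) '' Set.Icc 1 (N : ℤ)))
            - (sSup ((fun n : ℤ => (f n - f 0) / (n : ℝ)) '' Set.Icc 1 (N : ℤ)))) 0) with hF
  have hFeq : F = fun f => ENNReal.ofReal
      (max (((Finset.Icc (1 : ℤ) (N : ℤ)).inf' hsN (fun n : ℤ => (f 0 - f (-n)) / (n : ℝ)))
            - ((Finset.Icc (1 : ℤ) (N : ℤ)).sup' hsN (fun n : ℤ => (f n - f 0) / (n : ℝ)))) 0) := by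
    funext f
    rw [hF]
    rw [Finset.inf'_eq_csInf_image, Finset.sup'_eq_csSup_image, Finset.coe_Icc]
  have hFmeas : Measurable F := by
    rw [hFeq]
    refine ENNReal.measurable_ofReal.comp ?_
    refine Measurable.max ?_ measurable_const
    refine Measurable.sub ?_ ?_
    · exact meas_inf' _ hsN _ fun i =>
        ((measurable_pi_apply 0).sub (measurable_pi_apply (-i))).div_const _
    · exact meas_sup' _ hsN _ fun i =>
        ((measurable_pi_apply i).sub (measurable_pi_apply 0)).div_const _
  -- the shifted process
  set g : Ω → ℤ → ℝ := fun ω => fun n : ℤ => I ((k : ℤ) + n) ω - I k ω - (n : ℝ) * T k ω with hg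
  have hImeas : Measurable fun ω => fun n : ℤ => I n ω :=
    measurable_pi_lambda _ hMeas
  have hgae : AEMeasurable g P := by
    by_contra h
    have h0 : Measure.map g P = 0 := Measure.map_of_not_aemeasurable h
    rw [hshift k] at h0
    have huniv : (Measure.map (fun ω => fun n : ℤ => I n ω) P) Set.univ = 1 := by
      rw [Measure.map_apply hImeas MeasurableSet.univ]
      simp
    rw [h0] at huniv
    simp at huniv
  -- pointwise identification of F ∘ g
  have hptw : ∀ ω, F (g ω) = ENNReal.ofReal (max (γm ω - γp ω) 0) := by
    intro ω
    rw [hFeq]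
    show ENNReal.ofReal
        (max (((Finset.Icc (1 : ℤ) (N : ℤ)).inf' hsN
              (fun n : ℤ => (g ω 0 - g ω (-n)) / (n : ℝ)))
            - ((Finset.Icc (1 : ℤ) (N : ℤ)).sup' hsN
              (fun n : ℤ => (g ω n - g ω 0) / (n : ℝ)))) 0) = _
    have e1 : ((Finset.Icc (1 : ℤ) (N : ℤ)).inf' hsN
        (fun n : ℤ => (g ω 0 - g ω (-n)) / (n : ℝ))) = γm ω - T k ω := by
      have hc : ∀ n ∈ Finset.Icc (1 : ℤ) (N : ℤ),
          (g ω 0 - g ω (-n)) / (n : ℝ) = (I k ω - I ((k : ℤ) - n) ω) / (n : ℝ) - T k ω := by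
        intro n hn
        rw [Finset.mem_Icc] at hn
        have hn0 : (n : ℝ) ≠ 0 := by exact_mod_cast (by omega : n ≠ 0)
        rw [hg]
        have hkn : (k : ℤ) + -n = (k : ℤ) - n := by ring
        simp only [add_zero, Int.cast_zero, zero_mul, sub_zero, sub_self, zero_sub, hkn]
        push_cast
        field_simp
        try ring
      rw [Finset.inf'_congr hsN rfl hc, inf'_sub_const, hγm,
        Finset.inf'_eq_csInf_image, Finset.coe_Icc]
    have e2 : ((Finset.Icc (1 : ℤ) (N : ℤ)).sup' hsN
        (fun n : ℤ => (g ω n - g ω 0) / (n : ℝ))) = γp ω - T k ω := by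
      have hc : ∀ n ∈ Finset.Icc (1 : ℤ) (N : ℤ),
          (g ω n - g ω 0) / (n : ℝ) = (I ((k : ℤ) + n) ω - I k ω) / (n : ℝ) - T k ω := by
        intro n hn
        rw [Finset.mem_Icc] at hn
        have hn0 : (n : ℝ) ≠ 0 := by exact_mod_cast (by omega : n ≠ 0)
        rw [hg]
        simp only [add_zero, Int.cast_zero, zero_mul, sub_zero, sub_self]
        field_simp
        try ring
      rw [Finset.sup'_congr hsN rfl hc, sup'_sub_const, hγp,
        Finset.sup'_eq_csSup_image, Finset.coe_Icc]
    rw [e1, e2]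
    have : γm ω - T k ω - (γp ω - T k ω) = γm ω - γp ω := by ring
    rw [this]
  -- main equality chain
  have key : ∫⁻ ω, ENNReal.ofReal (max (γm ω - γp ω) 0) ∂P
      = ∫⁻ ω, ENNReal.ofReal
        (max ((sInf ((fun n : ℤ => (I 0 ω - I (-n) ω) / (n : ℝ)) '' Set.Icc 1 (N : ℤ)))
              - (sSup ((fun n : ℤ => (I n ω - I 0 ω) / (n : ℝ)) '' Set.Icc 1 (N : ℤ)))) 0) ∂P := by
    calc ∫⁻ ω, ENNReal.ofReal (max (γm ω - γp ω) 0) ∂P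
        = ∫⁻ ω, F (g ω) ∂P := lintegral_congr fun ω => (hptw ω).symm
      _ = ∫⁻ f, F f ∂(Measure.map g P) :=
          (lintegral_map' hFmeas.aemeasurable hgae).symm
      _ = ∫⁻ f, F f ∂(Measure.map (fun ω => fun n : ℤ => I n ω) P) := by rw [hshift k]
      _ = ∫⁻ ω, F (fun n : ℤ => I n ω) ∂P := lintegral_map hFmeas hImeas
      _ = _ := lintegral_congr fun ω => by rw [hF]
  exact le_of_eq key.symm
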